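/- Let F_B, F_S : [0,1] → [0,1] be nondecreasing, let v ∈ [0,1], and define u_B(p) = (v − p)·F_B(p). For λ ∈ [0,1], define G_λ(p) = λ + (1 − λ)·F_S(p) and u_λ(p) = u_B(p)·G_λ(p) for p ∈ [0,1]. Assume that for every λ ∈ [0,1] the set A_λ of maximizers of u_λ over [0,1] is nonempty and admits a greatest element p_λ^max. Then: (1) p_λ^max ≥ p_1^max for every λ ∈ [0,1]; (2) if 0 ≤ λ1 ≤ λ2 ≤ 1 then p_{λ1}^max ≥ p_{λ2}^max; consequently p_1^max ≤ p_λ^max ≤ p_0^max for every λ ∈ [0,1]. -/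
import Mathlib


open Set

/-- **Monotonicity of the rightmost optimal bid under mixture contamination.**
With `u_λ(p) = (v - p) F_B(p) (λ + (1-λ) F_S(p))`, if for each `λ ∈ [0,1]` the set of
maximizers of `u_λ` over `[0,1]` has a greatest element `pmax λ`, then `pmax λ ≥ pmax 1`
for all `λ ∈ [0,1]`, `pmax` is antitone on `[0,1]`, and `pmax 1 ≤ pmax λ ≤ pmax 0`. -/
theorem mixture_optimum
    (FB FS : ℝ → ℝ) (v : ℝ)
    (hFBmono : MonotoneOn FB (Icc 0 1)) (hFSmono : MonotoneOn FS (Icc 0 1))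
    (hFBrange : ∀ p ∈ Icc (0:ℝ) 1, FB p ∈ Icc (0:ℝ) 1)
    (hFSrange : ∀ p ∈ Icc (0:ℝ) 1, FS p ∈ Icc (0:ℝ) 1)
    (hv : v ∈ Icc (0:ℝ) 1)
    (uB : ℝ → ℝ) (huB : ∀ p, uB p = (v - p) * FB p)
    (G : ℝ → ℝ → ℝ) (hG : ∀ lam p, G lam p = lam + (1 - lam) * FS p)
    (u : ℝ → ℝ → ℝ) (hu : ∀ lam p, u lam p = uB p * G lam p)
    (pmax : ℝ → ℝ)
    (hpmax : ∀ lam ∈ Icc (0:ℝ) 1,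
      IsGreatest {p ∈ Icc (0:ℝ) 1 | ∀ q ∈ Icc (0:ℝ) 1, u lam q ≤ u lam p} (pmax lam)) :
    (∀ lam ∈ Icc (0:ℝ) 1, pmax 1 ≤ pmax lam) ∧
    (∀ lam1 lam2 : ℝ, 0 ≤ lam1 → lam1 ≤ lam2 → lam2 ≤ 1 → pmax lam2 ≤ pmax lam1) ∧
    (∀ lam ∈ Icc (0:ℝ) 1, pmax 1 ≤ pmax lam ∧ pmax lam ≤ pmax 0) := by
  have h0I : (0:ℝ) ∈ Icc (0:ℝ) 1 := ⟨le_refl 0, zero_le_one⟩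
  -- u lam p1 is ≥ 0 at the maximizer, since u lam 0 ≥ 0
  have hu0 : ∀ lam : ℝ, 0 ≤ lam → lam ≤ 1 → 0 ≤ u lam 0 := by
    intro lam h0 h1
    rw [hu, huB, hG]
    have hFB0 := hFBrange 0 h0I
    have hFS0 := hFSrange 0 h0I
    have hgn : (0:ℝ) ≤ lam + (1 - lam) * FS 0 := by nlinarith [hFS0.1, hFS0.2]
    have : (0:ℝ) ≤ (v - 0) * FB 0 := mul_nonneg (by linarith [hv.1]) hFB0.1
    exact mul_nonneg this hgn
  have key : ∀ lam1 lam2 : ℝ, 0 ≤ lam1 → lam1 ≤ lam2 → lam2 ≤ 1 → pmax lam2 ≤ pmax lam1 := by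
    intro lam1 lam2 h0 h12 h21
    rcases eq_or_lt_of_le h12 with rfl | hlt
    · exact le_refl _
    have hlam1I : lam1 ∈ Icc (0:ℝ) 1 := ⟨h0, le_trans h12 h21⟩
    have hlam2I : lam2 ∈ Icc (0:ℝ) 1 := ⟨le_trans h0 h12, h21⟩
    obtain ⟨⟨hp1I, hp1max⟩, hp1g⟩ := hpmax lam1 hlam1I
    obtain ⟨⟨hp2I, hp2max⟩, hp2g⟩ := hpmax lam2 hlam2I
    by_contra hcon
    push_neg at hcon
    -- hcon : pmax lam1 < pmax lam2
    set p1 := pmax lam1 with hp1def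
    set p2 := pmax lam2 with hp2def
    -- p2 is not a maximizer of u lam1, so some q beats it strictly
    have hnot : ¬ (∀ q ∈ Icc (0:ℝ) 1, u lam1 q ≤ u lam1 p2) := by
      intro hall
      exact absurd (hp1g ⟨hp2I, hall⟩) (not_le.mpr hcon)
    push_neg at hnot
    obtain ⟨q, hqI, hq⟩ := hnot
    have hB : u lam1 p2 < u lam1 p1 := lt_of_lt_of_le hq (hp1max q hqI)
    have hA : u lam2 p1 ≤ u lam2 p2 := hp2max p1 hp1I
    have h1nn : 0 ≤ u lam1 p1 := le_trans (hu0 lam1 hlam1I.1 hlam1I.2) (hp1max 0 h0I)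
    have h2nn : 0 ≤ u lam2 p2 := le_trans (hu0 lam2 hlam2I.1 hlam2I.2) (hp2max 0 h0I)
    -- abbreviations
    set x1 := uB p1 with hx1def
    set x2 := uB p2 with hx2def
    set F1 := FS p1 with hF1def
    set F2 := FS p2 with hF2def
    have hF1r := hFSrange p1 hp1I
    have hF2r := hFSrange p2 hp2I
    have hF12 : F1 ≤ F2 := hFSmono hp1I hp2I hcon.le
    rw [hu, hG] at hA hB h1nn h2nn
    rw [hu, hG] at hA hB
    -- now hA : x1 * (lam2 + (1-lam2)*F1) ≤ x2 * (lam2 + (1-lam2)*F2), etc.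
    set g11 := lam1 + (1 - lam1) * F1 with hg11def
    set g12 := lam1 + (1 - lam1) * F2 with hg12def
    set g21 := lam2 + (1 - lam2) * F1 with hg21def
    set g22 := lam2 + (1 - lam2) * F2 with hg22def
    have hg11 : 0 ≤ g11 := by rw [hg11def]; nlinarith [hF1r.1, hF1r.2]
    have hg12 : 0 ≤ g12 := by rw [hg12def]; nlinarith [hF2r.1, hF2r.2]
    have hg22pos : 0 < g22 := by
      rw [hg22def]
      have : 0 < lam2 := lt_of_le_of_lt h0 hlt
      nlinarith [hF2r.1, hF2r.2]
    have hdetle : g11 * g22 ≤ g21 * g12 := by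
      have hd : g11 * g22 - g21 * g12 = (F2 - F1) * (lam1 - lam2) := by
        rw [hg11def, hg12def, hg21def, hg22def]; ring
      nlinarith [mul_nonpos_of_nonneg_of_nonpos (sub_nonneg.2 hF12) (sub_nonpos.2 hlt.le)]
    have hx1det : 0 < x1 * (g11 * g22 - g21 * g12) := by
      nlinarith [mul_lt_mul_of_pos_right hB hg22pos, mul_le_mul_of_nonneg_right hA hg12]
    have hx1neg : x1 < 0 := by
      by_contra hx
      push_neg at hx
      nlinarith [mul_nonpos_of_nonneg_of_nonpos hx (sub_nonpos.2 hdetle)]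
    have hx1g11 : x1 * g11 = 0 :=
      le_antisymm (mul_nonpos_of_nonpos_of_nonneg hx1neg.le hg11) h1nn
    have hg11z : g11 = 0 := by
      rcases mul_eq_zero.mp hx1g11 with h | h
      · exact absurd h hx1neg.ne
      · exact h
    have hx2neg : x2 < 0 := by
      by_contra hx
      push_neg at hx
      have hnn : 0 ≤ x2 * g12 := mul_nonneg hx hg12
      rw [hg11z] at hB
      linarith
    linarith [mul_neg_of_neg_of_pos hx2neg hg22pos]
  refine ⟨fun lam hlam => key lam 1 hlam.1 hlam.2 le_rfl, key, fun lam hlam =>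
    ⟨key lam 1 hlam.1 hlam.2 le_rfl, key 0 lam le_rfl hlam.1 hlam.2⟩⟩
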